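/- Rank translation correctness: let Y be a sequence over [1..f] recording, for each element of a sorted list (by x-coordinate), the child index containing it. For a query rank interval [r1, r2] and a child τ, the elements of the query interval lying in child τ occupy exactly the rank interval [rank_τ(Y, r1−1)+1, rank_τ(Y, r2)] within child τ's x-sorted list, and this interval has size rank_τ(Y, r2) − rank_τ(Y, r1−1). -/

import Mathlib

def rnk {n f : ℕ} (Y : Fin n → Fin f) (τ : Fin f) (i : ℕ) : ℕ :=
  (Finset.univ.filter (fun j : Fin n => (j : ℕ) + 1 ≤ i ∧ Y j = τ)).card

lemma rnk_mono {n f : ℕ} (Y : Fin n → Fin f) (τ : Fin f) {i j : ℕ} (h : i ≤ j) :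
    rnk Y τ i ≤ rnk Y τ j := by
  apply Finset.card_le_card
  intro p hp
  simp only [Finset.mem_filter] at *
  exact ⟨hp.1, hp.2.1.trans h, hp.2.2⟩

lemma rnk_succ {n f : ℕ} (Y : Fin n → Fin f) (τ : Fin f) (p : Fin n) (hY : Y p = τ) :
    rnk Y τ ((p : ℕ) + 1) = rnk Y τ (p : ℕ) + 1 := by
  unfold rnk
  rw [show (Finset.univ.filter (fun j : Fin n => (j : ℕ) + 1 ≤ (p : ℕ) + 1 ∧ Y j = τ)) =
      insert p (Finset.univ.filter (fun j : Fin n => (j : ℕ) + 1 ≤ (p : ℕ) ∧ Y j = τ)) from ?_]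
  · rw [Finset.card_insert_of_notMem]
    simp
  · ext j
    simp only [Finset.mem_filter, Finset.mem_insert, Finset.mem_univ, true_and]
    constructor
    · rintro ⟨hj, hτ⟩
      rcases eq_or_lt_of_le (Nat.succ_le_succ_iff.mp hj) with h | h
      · left; exact Fin.ext h
      · right; exact ⟨h, hτ⟩
    · rintro (rfl | ⟨hj, hτ⟩)
      · exact ⟨le_rfl, hY⟩
      · exact ⟨by omega, hτ⟩

theorem rank_translation (n f : ℕ) (Y : Fin n → Fin f) (τ : Fin f)
    (r1 r2 : ℕ) (h1 : 1 ≤ r1) (h12 : r1 ≤ r2) (h2 : r2 ≤ n) :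
    (Finset.image (fun p : Fin n => rnk Y τ ((p : ℕ) + 1))
        (Finset.univ.filter
          (fun p : Fin n => r1 ≤ (p : ℕ) + 1 ∧ (p : ℕ) + 1 ≤ r2 ∧ Y p = τ)) =
      Finset.Icc (rnk Y τ (r1 - 1) + 1) (rnk Y τ r2)) ∧
    (Finset.univ.filter
        (fun p : Fin n => r1 ≤ (p : ℕ) + 1 ∧ (p : ℕ) + 1 ≤ r2 ∧ Y p = τ)).card =
      rnk Y τ r2 - rnk Y τ (r1 - 1) := by
  set S := Finset.univ.filter
      (fun p : Fin n => r1 ≤ (p : ℕ) + 1 ∧ (p : ℕ) + 1 ≤ r2 ∧ Y p = τ) with hS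
  -- card fact : rnk r2 = rnk (r1-1) + S.card
  have hsplit : rnk Y τ r2 = rnk Y τ (r1 - 1) + S.card := by
    unfold rnk
    rw [hS, ← Finset.card_union_of_disjoint]
    · congr 1
      ext j
      simp only [Finset.mem_filter, Finset.mem_union, Finset.mem_univ, true_and]
      constructor
      · rintro ⟨hj, hτ⟩
        by_cases h : (j : ℕ) + 1 ≤ r1 - 1
        · exact Or.inl ⟨h, hτ⟩
        · exact Or.inr ⟨by omega, hj, hτ⟩
      · rintro (⟨hj, hτ⟩ | ⟨_, hj, hτ⟩)
        · exact ⟨by omega, hτ⟩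
        · exact ⟨hj, hτ⟩
    · rw [Finset.disjoint_left]
      rintro j hj hj'
      simp only [Finset.mem_filter] at hj hj'
      omega
  have key : ∀ p q : Fin n, p ∈ S → q ∈ S → (p : ℕ) < (q : ℕ) →
      rnk Y τ ((p : ℕ) + 1) < rnk Y τ ((q : ℕ) + 1) := by
    intro p q hp hq hlt
    simp only [hS, Finset.mem_filter] at hp hq
    have : rnk Y τ ((p : ℕ) + 1) ≤ rnk Y τ (q : ℕ) := rnk_mono Y τ (by omega)
    rw [rnk_succ Y τ q hq.2.2.2]
    omega
  have hinj : Set.InjOn (fun p : Fin n => rnk Y τ ((p : ℕ) + 1)) S := by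
    intro p hp q hq hpq
    simp only at hpq
    by_contra hne
    rcases Nat.lt_or_ge (p : ℕ) (q : ℕ) with h | h
    · have := key p q hp hq h; omega
    · rcases Nat.lt_or_ge (q : ℕ) (p : ℕ) with h' | h'
      · have := key q p hq hp h'; omega
      · exact hne (Fin.ext (by omega))
  have hsub : Finset.image (fun p : Fin n => rnk Y τ ((p : ℕ) + 1)) S ⊆
      Finset.Icc (rnk Y τ (r1 - 1) + 1) (rnk Y τ r2) := by
    intro k hk
    simp only [Finset.mem_image] at hk
    obtain ⟨p, hp, rfl⟩ := hk
    simp only [hS, Finset.mem_filter] at hp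
    rw [Finset.mem_Icc]
    constructor
    · have h1' : rnk Y τ (r1 - 1) ≤ rnk Y τ (p : ℕ) := rnk_mono Y τ (by omega)
      rw [rnk_succ Y τ p hp.2.2.2]
      omega
    · exact rnk_mono Y τ hp.2.2.1
  have hcard : S.card = rnk Y τ r2 - rnk Y τ (r1 - 1) := by omega
  refine ⟨Finset.eq_of_subset_of_card_le hsub ?_, hcard⟩
  rw [Nat.card_Icc, Finset.card_image_of_injOn hinj]
  omega
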